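/- Let G be a locally compact Hausdorff topological group and Γ ⊆ G a discrete subgroup. Then there exists a continuous function ψ: G → [0,∞) such that: (i) for every compact set C ⊆ G, the set {γ ∈ Γ : ψ(γc) ≠ 0 for some c ∈ C} is finite; and (ii) Σ_{γ∈Γ} ψ(γx) = 1 for every x ∈ G. -/

import Mathlib

open Set Function Topology Pointwise



namespace Stmt11

variable {G : Type*} [Group G] [TopologicalSpace G] [IsTopologicalGroup G]

lemma exists_sym_nhds {U : Set G} (hU : U ∈ nhds (1 : G)) :
    ∃ V : Set G, IsOpen V ∧ (1:G) ∈ V ∧ ∀ u ∈ V, ∀ v ∈ V, u⁻¹ * v ∈ U := by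
  have h2 : ContinuousAt (fun p : G × G => p.1⁻¹ * p.2) (1, 1) :=
    (Continuous.mul (continuous_inv.comp continuous_fst) continuous_snd).continuousAt
  have hpre : (fun p : G × G => p.1⁻¹ * p.2) ⁻¹' U ∈ nhds ((1:G), (1:G)) := by
    apply h2; simpa using hU
  rw [nhds_prod_eq, Filter.mem_prod_iff] at hpre
  obtain ⟨s, hs, t, ht, hst⟩ := hpre
  refine ⟨interior s ∩ interior t, isOpen_interior.inter isOpen_interior,
    ⟨mem_interior_iff_mem_nhds.2 hs, mem_interior_iff_mem_nhds.2 ht⟩, ?_⟩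
  intro u hu v hv
  exact hst (Set.mk_mem_prod (interior_subset hu.1) (interior_subset hv.2))

lemma exists_sep_nhds {Γ : Subgroup G} (hdisc : DiscreteTopology ↥Γ) :
    ∃ V : Set G, IsOpen V ∧ (1:G) ∈ V ∧
      ∀ x : G, ((x • V) ∩ (Γ : Set G)).Subsingleton := by
  haveI : DiscreteTopology ↥((Γ : Set G)) := hdisc
  obtain ⟨U, hU, hU1⟩ :=
    nhds_inter_eq_singleton_of_mem_discrete (isDiscrete_iff_discreteTopology.mpr inferInstance) (Γ.one_mem : (1:G) ∈ (Γ : Set G))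
  obtain ⟨V, hVo, hV1, hV⟩ := exists_sym_nhds hU
  refine ⟨V, hVo, hV1, ?_⟩
  intro x a ha b hb
  obtain ⟨u, hu, hua⟩ := ha.1
  obtain ⟨v, hv, hvb⟩ := hb.1
  have hua' : x * u = a := hua
  have hvb' : x * v = b := hvb
  have h1 : a⁻¹ * b ∈ U := by
    have : a⁻¹ * b = u⁻¹ * v := by
      subst hua'; subst hvb'; simp [mul_assoc]
    rw [this]; exact hV u hu v hv
  have h2 : a⁻¹ * b ∈ U ∩ (Γ : Set G) := ⟨h1, Γ.mul_mem (Γ.inv_mem ha.2) hb.2⟩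
  rw [hU1, mem_singleton_iff] at h2
  exact (inv_mul_eq_one.1 h2)

lemma finite_inter {Γ : Subgroup G} (hdisc : DiscreteTopology ↥Γ)
    {K : Set G} (hK : IsCompact K) : ((Γ : Set G) ∩ K).Finite := by
  obtain ⟨V, hVo, hV1, hV⟩ := exists_sep_nhds hdisc
  obtain ⟨s, -, hs⟩ := hK.elim_nhds_subcover (fun x => x • V)
    (fun x _ => (hVo.smul x).mem_nhds ⟨1, hV1, mul_one x⟩)
  have hsub : (Γ : Set G) ∩ K ⊆ ⋃ x ∈ s, ((x • V) ∩ (Γ : Set G)) := by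
    intro g hg
    obtain ⟨x, hxs, hgx⟩ := mem_iUnion₂.1 (hs hg.2)
    exact mem_iUnion₂.2 ⟨x, hxs, hgx, hg.1⟩
  exact (s.finite_toSet.biUnion (fun x _ => (hV x).finite)).subset hsub

lemma isClosed_coe [T2Space G] {Γ : Subgroup G} (hdisc : DiscreteTopology ↥Γ) :
    IsClosed (Γ : Set G) := by
  obtain ⟨V, hVo, hV1, hV⟩ := exists_sep_nhds hdisc
  rw [← isOpen_compl_iff, isOpen_iff_mem_nhds]
  intro x hx
  by_cases h : ((x • V) ∩ (Γ : Set G)) = ∅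
  · refine Filter.mem_of_superset ((hVo.smul x).mem_nhds ⟨1, hV1, mul_one x⟩) ?_
    intro g hg hgΓ
    exact absurd (Set.mem_inter hg hgΓ) (by simp [h])
  · obtain ⟨γ₀, hγ₀⟩ := Set.nonempty_iff_ne_empty.2 h
    have hxγ : x ≠ γ₀ := fun hxe => hx (hxe ▸ hγ₀.2)
    refine Filter.mem_of_superset
      (Filter.inter_mem ((hVo.smul x).mem_nhds ⟨1, hV1, mul_one x⟩)
        ((isOpen_compl_singleton (x := γ₀)).mem_nhds hxγ)) ?_
    rintro g ⟨hg1, hg2⟩ hgΓ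
    exact hg2 (hV x ⟨hg1, hgΓ⟩ hγ₀)

lemma t2_quotient [T2Space G] (Γ : Subgroup G) (hdisc : DiscreteTopology ↥Γ) :
    T2Space (G ⧸ Γ) := by
  have hclosed : IsClosed {p : G × G | p.1⁻¹ * p.2 ∈ Γ} :=
    (isClosed_coe hdisc).preimage
      ((continuous_inv.comp continuous_fst).mul continuous_snd)
  constructor
  intro a b hab
  obtain ⟨x, rfl⟩ := QuotientGroup.mk_surjective a
  obtain ⟨y, rfl⟩ := QuotientGroup.mk_surjective b
  have hxy : (x, y) ∈ {p : G × G | p.1⁻¹ * p.2 ∈ Γ}ᶜ := fun h => hab (QuotientGroup.eq.2 h)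
  obtain ⟨A, B, hA, hB, hxA, hyB, hAB⟩ := isOpen_prod_iff.1 hclosed.isOpen_compl x y hxy
  refine ⟨QuotientGroup.mk '' A, QuotientGroup.mk '' B, QuotientGroup.isOpenMap_coe A hA,
    QuotientGroup.isOpenMap_coe B hB, ⟨x, hxA, rfl⟩, ⟨y, hyB, rfl⟩, ?_⟩
  rw [Set.disjoint_left]
  rintro z ⟨p, hp, hpz⟩ ⟨q, hq, hqz⟩
  have hpq : p⁻¹ * q ∈ Γ := QuotientGroup.eq.1 (by rw [hpz, hqz])
  exact hAB (Set.mk_mem_prod hp hq) hpq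


/-- A space covered by pairwise disjoint open paracompact pieces is paracompact. -/
lemma paracompact_of_clopen {X : Type*} [TopologicalSpace X] (P : Set (Set X))
    (hP : ∀ p ∈ P, IsOpen p)
    (hdisj : ∀ p ∈ P, ∀ q ∈ P, p ≠ q → Disjoint p q)
    (hcov : ∀ x : X, ∃ p ∈ P, x ∈ p)
    (hpara : ∀ p ∈ P, ParacompactSpace ↥p) : ParacompactSpace X := by
  constructor
  intro α s hso hsc
  have key : ∀ p : P, ∃ v : α → Set X, (∀ a, IsOpen (v a)) ∧ (∀ a, v a ⊆ s a ∩ ↑p) ∧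
      ((p : Set X) ⊆ ⋃ a, v a) ∧
      ∀ x ∈ (p : Set X), ∃ N ∈ 𝓝 x, N ⊆ (p : Set X) ∧ {a | (v a ∩ N).Nonempty}.Finite := by
    rintro ⟨p, hp⟩
    haveI := hpara p hp
    have hopen := hP p hp
    set u : α → Set ↥p := fun a => Subtype.val ⁻¹' s a with hu
    have huo : ∀ a, IsOpen (u a) := fun a => (hso a).preimage continuous_subtype_val
    have huc : ⋃ a, u a = univ := by
      apply eq_univ_of_forall; intro z
      have hz : (z : X) ∈ ⋃ a, s a := hsc ▸ mem_univ _
      obtain ⟨a, ha⟩ := mem_iUnion.1 hz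
      exact mem_iUnion.2 ⟨a, ha⟩
    obtain ⟨v, hvo, hvc, hvl, hvs⟩ := precise_refinement u huo huc
    refine ⟨fun a => Subtype.val '' v a,
      fun a => hopen.isOpenEmbedding_subtypeVal.isOpenMap _ (hvo a), fun a => ?_,
      fun x hx => ?_, fun x hx => ?_⟩
    · rintro y ⟨z, hz, rfl⟩
      exact ⟨hvs a hz, z.2⟩
    · have hz : (⟨x, hx⟩ : ↥p) ∈ ⋃ a, v a := hvc ▸ mem_univ _
      obtain ⟨a, ha⟩ := mem_iUnion.1 hz
      exact mem_iUnion.2 ⟨a, ⟨_, ha, rfl⟩⟩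
    · obtain ⟨N', hN', hfin⟩ := hvl ⟨x, hx⟩
      obtain ⟨O, hOsub, hOo, hOx⟩ := mem_nhds_iff.1 hN'
      refine ⟨Subtype.val '' O,
        (hopen.isOpenEmbedding_subtypeVal.isOpenMap _ hOo).mem_nhds ⟨⟨x, hx⟩, hOx, rfl⟩,
        ?_, ?_⟩
      · rintro y ⟨z, _, rfl⟩; exact z.2
      · apply hfin.subset
        rintro a ⟨y, ⟨z, hz, rfl⟩, w, hw, hwz⟩
        have : w = z := Subtype.val_injective hwz
        exact ⟨z, hz, hOsub (this ▸ hw)⟩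
  choose v hvo hvs hvcov hvloc using key
  refine ⟨(↥P) × α, fun q => v q.1 q.2, fun q => hvo q.1 q.2, ?_, ?_, fun q => ⟨q.2, (hvs q.1 q.2).trans inter_subset_left⟩⟩
  · apply eq_univ_of_forall
    intro x
    obtain ⟨p, hpP, hxp⟩ := hcov x
    obtain ⟨a, ha⟩ := mem_iUnion.1 (hvcov ⟨p, hpP⟩ hxp)
    exact mem_iUnion.2 ⟨(⟨p, hpP⟩, a), ha⟩
  · intro x
    obtain ⟨p, hpP, hxp⟩ := hcov x
    obtain ⟨N, hN, hNp, hNfin⟩ := hvloc ⟨p, hpP⟩ x hxp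
    refine ⟨N, hN, ?_⟩
    have himg : {q : ↥P × α | (v q.1 q.2 ∩ N).Nonempty} ⊆
        (fun a => ((⟨p, hpP⟩ : ↥P), a)) '' {a | (v ⟨p, hpP⟩ a ∩ N).Nonempty} := by
      rintro ⟨q, a⟩ ⟨y, hy1, hy2⟩
      have hyq : y ∈ (q : Set X) := ((hvs q a) hy1).2
      have hyp : y ∈ p := hNp hy2
      have hqp : q = (⟨p, hpP⟩ : ↥P) := by
        by_contra hne
        have : (q : Set X) ≠ p := fun h => hne (Subtype.ext h)
        exact (hdisj q q.2 p hpP this).ne_of_mem hyq hyp rfl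
      subst hqp
      exact ⟨a, ⟨y, hy1, hy2⟩, rfl⟩
    exact (hNfin.image _).subset himg




lemma paracompact_quotient [LocallyCompactSpace G] [T2Space G] (Γ : Subgroup G)
    (h2 : T2Space (G ⧸ Γ)) : ParacompactSpace (G ⧸ Γ) := by
  classical
  obtain ⟨K, hKc, hK1, -⟩ := exists_compact_subset isOpen_univ (mem_univ (1 : G))
  set S : Set G := K ∪ K⁻¹ with hSdef
  have hScomp : IsCompact S := hKc.union hKc.inv
  have hSsymm : S⁻¹ = S := by
    rw [hSdef, Set.union_inv, inv_inv, union_comm]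
  have hS1 : (1 : G) ∈ interior S :=
    interior_mono subset_union_left hK1
  have hpow : ∀ n : ℕ, IsCompact (S ^ (n + 1)) := by
    intro n
    induction n with
    | zero => simpa using hScomp
    | succ n ih => rw [pow_succ]; exact ih.mul hScomp
  have hone : (1 : G) ∈ ⋃ n : ℕ, S ^ (n + 1) :=
    mem_iUnion.2 ⟨0, by simpa using interior_subset hS1⟩
  have hmul : ∀ {a b : G}, a ∈ ⋃ n : ℕ, S ^ (n + 1) → b ∈ ⋃ n : ℕ, S ^ (n + 1) →
      a * b ∈ ⋃ n : ℕ, S ^ (n + 1) := by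
    intro a b ha hb
    obtain ⟨m, hm⟩ := mem_iUnion.1 ha
    obtain ⟨n, hn⟩ := mem_iUnion.1 hb
    refine mem_iUnion.2 ⟨m + n + 1, ?_⟩
    rw [show m + n + 1 + 1 = (m + 1) + (n + 1) by ring, pow_add]
    exact Set.mul_mem_mul hm hn
  have hinv : ∀ {a : G}, a ∈ ⋃ n : ℕ, S ^ (n + 1) → a⁻¹ ∈ ⋃ n : ℕ, S ^ (n + 1) := by
    intro a ha
    obtain ⟨m, hm⟩ := mem_iUnion.1 ha
    refine mem_iUnion.2 ⟨m, ?_⟩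
    have h1 : a⁻¹ ∈ (S ^ (m + 1))⁻¹ := Set.inv_mem_inv.2 hm
    rwa [← inv_pow, hSsymm] at h1
  set H : Subgroup G :=
    { carrier := ⋃ n : ℕ, S ^ (n + 1)
      one_mem' := hone
      mul_mem' := hmul
      inv_mem' := hinv } with hHdef
  have hSH : S ⊆ (H : Set G) := fun a ha => mem_iUnion.2 ⟨0, by simpa using ha⟩
  have hHopen : IsOpen (H : Set G) :=
    H.isOpen_of_mem_nhds (g := 1)
      (Filter.mem_of_superset (isOpen_interior.mem_nhds hS1) (interior_subset.trans hSH))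
  set π : G → G ⧸ Γ := QuotientGroup.mk with hπdef
  have hπcont : Continuous π := QuotientGroup.continuous_mk
  have hπopen : IsOpenMap π := QuotientGroup.isOpenMap_coe
  set P : Set (Set (G ⧸ Γ)) := range (fun x : G => π '' DoubleCoset.doubleCoset x (H : Set G) (Γ : Set G))
    with hPdef
  have hdosetopen : ∀ x : G, IsOpen (DoubleCoset.doubleCoset x (H : Set G) (Γ : Set G)) := by
    intro x
    show IsOpen ((H : Set G) * {x} * (Γ : Set G))
    exact (hHopen.mul_right).mul_right
  -- saturation: membership transfers along right Γ-multiplication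
  have hsat : ∀ (x a : G) (γ : G), γ ∈ Γ → a ∈ DoubleCoset.doubleCoset x (H : Set G) (Γ : Set G) →
      a * γ ∈ DoubleCoset.doubleCoset x (H : Set G) (Γ : Set G) := by
    intro x a γ hγ ha
    obtain ⟨h, hh, γ', hγ', rfl⟩ := DoubleCoset.mem_doubleCoset.1 ha
    exact DoubleCoset.mem_doubleCoset.2 ⟨h, hh, γ' * γ, Γ.mul_mem hγ' hγ, by rw [mul_assoc]⟩
  apply paracompact_of_clopen P
  · rintro p ⟨x, rfl⟩
    exact hπopen _ (hdosetopen x)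
  · rintro p ⟨x, rfl⟩ q ⟨y, rfl⟩ hne
    rw [Set.disjoint_left]
    rintro z ⟨a, ha, haz⟩ ⟨b, hb, hbz⟩
    have hab : a⁻¹ * b ∈ Γ := QuotientGroup.eq.1 (show (a : G ⧸ Γ) = b by rw [show ((a : G) : G ⧸ Γ) = π a from rfl, show ((b : G) : G ⧸ Γ) = π b from rfl, haz, hbz])
    have hbx : b ∈ DoubleCoset.doubleCoset x (H : Set G) (Γ : Set G) := by
      have : b = a * (a⁻¹ * b) := by group
      rw [this]
      exact hsat x a _ hab ha
    have hxy : DoubleCoset.doubleCoset x (H : Set G) (Γ : Set G) = DoubleCoset.doubleCoset y (H : Set G) (Γ : Set G) := by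
      rw [← DoubleCoset.doubleCoset_eq_of_mem hbx, DoubleCoset.doubleCoset_eq_of_mem hb]
    exact hne (by simp only []; rw [hxy])
  · intro z
    obtain ⟨x, rfl⟩ := QuotientGroup.mk_surjective z
    exact ⟨_, ⟨x, rfl⟩, ⟨x, DoubleCoset.mem_doubleCoset_self H Γ x, rfl⟩⟩
  · rintro p ⟨x, rfl⟩
    haveI : LocallyCompactSpace (G ⧸ Γ) := QuotientGroup.instLocallyCompactSpace Γ
    haveI := (hπopen _ (hdosetopen x)).locallyCompactSpace
    haveI : SigmaCompactSpace ↥(π '' DoubleCoset.doubleCoset x (H : Set G) (Γ : Set G)) := by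
      rw [← isSigmaCompact_iff_sigmaCompactSpace]
      have heq : π '' DoubleCoset.doubleCoset x (H : Set G) (Γ : Set G) = ⋃ n : ℕ, π '' (S ^ (n + 1) * {x}) := by
        apply subset_antisymm
        · rintro z ⟨a, ha, rfl⟩
          obtain ⟨h, hh, γ, hγ, rfl⟩ := DoubleCoset.mem_doubleCoset.1 ha
          obtain ⟨n, hn⟩ := mem_iUnion.1 hh
          refine mem_iUnion.2 ⟨n, ⟨h * x, Set.mul_mem_mul hn rfl, ?_⟩⟩
          exact (QuotientGroup.mk_mul_of_mem (h * x) hγ).symm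
        · rintro z hz
          obtain ⟨n, b, hb, rfl⟩ := mem_iUnion.1 hz
          obtain ⟨h, hh, x', hx', rfl⟩ := Set.mem_mul.1 hb
          refine ⟨h * x', DoubleCoset.mem_doubleCoset.2 ⟨h, mem_iUnion.2 ⟨n, hh⟩, 1, Γ.one_mem, ?_⟩, rfl⟩
          rw [mul_one, hx']
      rw [heq]
      exact isSigmaCompact_iUnion_of_isCompact _
        (fun n => (((hpow n).mul isCompact_singleton).image hπcont))
    infer_instance

end Stmt11

/-- partition of unity along `Γ`-orbits.  Let `G` be a locally
compact Hausdorff topological group and `Γ ≤ G` discrete.  Then there is a continuous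
`ψ : G → [0,∞)` such that for every compact `C ⊆ G` only finitely many `γ ∈ Γ` have
`ψ(γ·) ≠ 0` somewhere on `C`, and `Σ_{γ∈Γ} ψ(γx) = 1` for every `x ∈ G`. -/
theorem stmt11 {G : Type*} [Group G] [TopologicalSpace G] [IsTopologicalGroup G]
    [LocallyCompactSpace G] [T2Space G]
    (Γ : Subgroup G) (hdisc : DiscreteTopology ↥Γ) :
    ∃ ψ : G → ℝ, Continuous ψ ∧ (∀ x, 0 ≤ ψ x) ∧
      (∀ C : Set G, IsCompact C → {γ : ↥Γ | ∃ c ∈ C, ψ ((γ : G) * c) ≠ 0}.Finite) ∧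
      (∀ x : G, HasSum (fun γ : ↥Γ => ψ ((γ : G) * x)) 1) := by
  classical
  haveI hT2X : T2Space (G ⧸ Γ) := Stmt11.t2_quotient Γ hdisc
  haveI hPara : ParacompactSpace (G ⧸ Γ) := Stmt11.paracompact_quotient Γ hT2X
  haveI : NormalSpace (G ⧸ Γ) := inferInstance
  haveI : DiscreteTopology ↥((Γ : Set G)) := hdisc
  obtain ⟨U, hUnhds, hU1⟩ :=
    nhds_inter_eq_singleton_of_mem_discrete (isDiscrete_iff_discreteTopology.mpr inferInstance) (Γ.one_mem : (1:G) ∈ (Γ : Set G))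
  obtain ⟨V₁, hV₁o, hV₁1, hV₁⟩ := Stmt11.exists_sym_nhds hUnhds
  obtain ⟨K, hKc, hK1, hKV₁⟩ := exists_compact_subset hV₁o hV₁1
  set W : Set G := interior K with hWdef
  have hWo : IsOpen W := isOpen_interior
  have hW1 : (1:G) ∈ W := hK1
  have hWK : closure W ⊆ K := closure_minimal interior_subset hKc.isClosed
  have hWc : IsCompact (closure W) := hKc.of_isClosed_subset isClosed_closure hWK
  obtain ⟨K', hK'c, hK'1, hK'W⟩ := exists_compact_subset hWo hW1
  set V : Set G := interior K' with hVdef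
  have hVo : IsOpen V := isOpen_interior
  have hV1 : (1:G) ∈ V := hK'1
  have hVsubW : V ⊆ W := interior_subset.trans hK'W
  set π : G → G ⧸ Γ := QuotientGroup.mk with hπdef
  have hπcont : Continuous π := QuotientGroup.continuous_mk
  have hπopen : IsOpenMap π := QuotientGroup.isOpenMap_coe
  -- injectivity of π on translates of `closure W`
  have hinj : ∀ (i : G) {a b : G}, a ∈ i • closure W → b ∈ i • closure W →
      π a = π b → a = b := by
    rintro i a b ha hb hab
    obtain ⟨u, hu, hua⟩ := ha
    obtain ⟨v, hv, hvb⟩ := hb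
    have hua' : i * u = a := hua
    have hvb' : i * v = b := hvb
    subst hua'; subst hvb'
    have hmem : (i*u)⁻¹ * (i*v) ∈ U := by
      have h : (i*u)⁻¹ * (i*v) = u⁻¹ * v := by simp [mul_assoc]
      rw [h]; exact hV₁ u (hKV₁ (hWK hu)) v (hKV₁ (hWK hv))
    have hγ : (i*u)⁻¹ * (i*v) ∈ (Γ : Set G) := QuotientGroup.eq.1 hab
    have hone : (i*u)⁻¹ * (i*v) ∈ U ∩ (Γ : Set G) := ⟨hmem, hγ⟩
    rw [hU1, mem_singleton_iff] at hone
    exact inv_mul_eq_one.1 hone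
  -- the open cover of the quotient
  set Ucov : G → Set (G ⧸ Γ) := fun i => π '' (i • V) with hUcovdef
  have hUcovo : ∀ i, IsOpen (Ucov i) := fun i => hπopen _ (hVo.smul i)
  have hUcovc : (univ : Set (G ⧸ Γ)) ⊆ ⋃ i, Ucov i := by
    intro z _
    obtain ⟨x, rfl⟩ := QuotientGroup.mk_surjective z
    exact mem_iUnion.2 ⟨x, ⟨x, ⟨1, hV1, mul_one x⟩, rfl⟩⟩
  obtain ⟨f, hfsub⟩ := PartitionOfUnity.exists_isSubordinate isClosed_univ Ucov hUcovo hUcovc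
  -- the lifted bump functions
  set g : G → G → ℝ := fun i a => if a ∈ i • W then f i (π a) else 0 with hgdef
  have hg_nonneg : ∀ i a, 0 ≤ g i a := by
    intro i a
    by_cases h : a ∈ i • W <;> simp [hgdef, h, f.nonneg i (π a)]
  have hg_ne : ∀ {i a}, g i a ≠ 0 → a ∈ i • W ∧ f i (π a) ≠ 0 := by
    intro i a h
    by_cases hmem : a ∈ i • W
    · exact ⟨hmem, by simpa [hgdef, hmem] using h⟩
    · exact absurd (by simp [hgdef, hmem]) h
  have hg_eq : ∀ {i a}, a ∈ i • W → g i a = f i (π a) := by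
    intro i a h; simp [hgdef, h]
  have hVclW : V ⊆ closure W := hVsubW.trans subset_closure
  -- continuity of the lifts
  have hg_cont : ∀ i, Continuous (g i) := by
    intro i
    have hA : IsOpen (i • W) := hWo.smul i
    have hcW : IsCompact (i • closure W) := by
      rw [show i • closure W = (fun b => i * b) '' closure W from rfl]
      exact hWc.image (continuous_mul_left i)
    have hclosedset : IsClosed ((i • closure W) ∩ π ⁻¹' (tsupport ⇑(f i))) :=
      hcW.isClosed.inter ((isClosed_tsupport _).preimage hπcont)
    rw [continuous_iff_continuousAt]
    intro a
    by_cases hmem : a ∈ (i • closure W) ∩ π ⁻¹' (tsupport ⇑(f i))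
    · have haW : a ∈ i • W := by
        have h1 : π a ∈ π '' (i • V) := hfsub i hmem.2
        obtain ⟨b, hb, hba⟩ := h1
        have hba' : b = a := hinj i (smul_set_mono hVclW hb) hmem.1 hba
        exact hba' ▸ (smul_set_mono hVsubW hb)
      have hev : g i =ᶠ[𝓝 a] fun b => f i (π b) :=
        Filter.eventuallyEq_of_mem (hA.mem_nhds haW) (fun b hb => hg_eq hb)
      exact (((f i).continuous.comp hπcont).continuousAt).congr hev.symm
    · have hop : IsOpen (((i • closure W) ∩ π ⁻¹' (tsupport ⇑(f i)))ᶜ) := hclosedset.isOpen_compl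
      have hev : g i =ᶠ[𝓝 a] fun _ => (0:ℝ) := by
        refine Filter.eventuallyEq_of_mem (hop.mem_nhds hmem) (fun b hb => ?_)
        by_cases hbW : b ∈ i • W
        · have hb2 : b ∈ i • closure W := smul_set_mono subset_closure hbW
          have hnt : π b ∉ tsupport ⇑(f i) := fun hc => hb ⟨hb2, hc⟩
          have h0 : f i (π b) = 0 := image_eq_zero_of_notMem_tsupport hnt
          simp [hgdef, hbW, h0]
        · simp [hgdef, hbW]
      exact continuousAt_const.congr hev.symm
  -- uniqueness of the translate in the support
  have hg_unique : ∀ (i a : G) (γ₁ γ₂ : ↥Γ), g i (a * γ₁) ≠ 0 → g i (a * γ₂) ≠ 0 → γ₁ = γ₂ := by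
    intro i a γ₁ γ₂ h1 h2
    have m1 := smul_set_mono subset_closure (hg_ne h1).1
    have m2 := smul_set_mono subset_closure (hg_ne h2).1
    have hpi : π (a * γ₁) = π (a * γ₂) := by
      rw [hπdef]
      rw [QuotientGroup.mk_mul_of_mem a γ₁.2, QuotientGroup.mk_mul_of_mem a γ₂.2]
    exact Subtype.ext (mul_left_cancel (hinj i m1 m2 hpi))
  have hg_exists : ∀ (i a : G), f i (π a) ≠ 0 → ∃ γ : ↥Γ, g i (a * γ) ≠ 0 := by
    intro i a hfa
    have h1 : π a ∈ π '' (i • V) := hfsub i (subset_tsupport _ hfa)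
    obtain ⟨b, hbV, hba⟩ := h1
    have hγmem : a⁻¹ * b ∈ Γ := QuotientGroup.eq.1 hba.symm
    refine ⟨⟨a⁻¹ * b, hγmem⟩, ?_⟩
    have hab : a * (a⁻¹ * b) = b := by group
    show g i (a * (a⁻¹ * b)) ≠ 0
    rw [hab, hg_eq (smul_set_mono hVsubW hbV), hba]
    exact hfa
  -- finite sums over translates recover f i
  have hg_sum : ∀ (i a : G) (s : Finset ↥Γ), (∀ γ : ↥Γ, g i (a * γ) ≠ 0 → γ ∈ s) →
      ∑ γ ∈ s, g i (a * γ) = f i (π a) := by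
    intro i a s hcl
    by_cases hex : ∃ γ : ↥Γ, g i (a * γ) ≠ 0
    · obtain ⟨γ₀, hγ₀⟩ := hex
      rw [Finset.sum_eq_single_of_mem γ₀ (hcl _ hγ₀) (fun γ _ hne => by
        by_contra h; exact hne (hg_unique i a γ γ₀ h hγ₀))]
      rw [hg_eq (hg_ne hγ₀).1, hπdef, QuotientGroup.mk_mul_of_mem a γ₀.2]
    · push_neg at hex
      rw [Finset.sum_eq_zero (fun γ _ => hex γ)]
      by_contra hne
      obtain ⟨γ, hγ⟩ := hg_exists i a (fun h => hne h.symm)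
      exact hγ (hex γ)
  -- the Γ-invariant sum
  set ψ₀ : G → ℝ := fun a => ∑ᶠ i, g i a with hψ₀def
  have hlf : LocallyFinite fun i => support (g i) := by
    intro a
    obtain ⟨N, hN, hNfin⟩ := f.locallyFinite (π a)
    refine ⟨π ⁻¹' N, hπcont.continuousAt.preimage_mem_nhds hN, hNfin.subset ?_⟩
    rintro i ⟨b, hb1, hb2⟩
    exact ⟨π b, (hg_ne hb1).2, hb2⟩
  have hψ₀cont : Continuous ψ₀ := continuous_finsum hg_cont hlf
  have hψ₀nonneg : ∀ a, 0 ≤ ψ₀ a := fun a => finsum_nonneg (fun i => hg_nonneg i a)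
  have hpt : ∀ a : G, (support fun i => g i a).Finite := fun a => hlf.point_finite a
  have hle : ∀ i a, g i a ≤ ψ₀ a := fun i a =>
    single_le_finsum i (hpt a) (fun j => hg_nonneg j a)
  have hψ₀ne : ∀ {a}, ψ₀ a ≠ 0 → ∃ i, g i a ≠ 0 := by
    intro a ha
    by_contra h
    push_neg at h
    exact ha (finsum_eq_zero_of_forall_eq_zero h)
  have hψpos : ∀ i b, g i b ≠ 0 → ψ₀ b ≠ 0 := fun i b h =>
    (lt_of_lt_of_le ((hg_nonneg i b).lt_of_ne (Ne.symm h)) (hle i b)).ne'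
  -- finiteness (right-translation version)
  have hfin_right : ∀ C : Set G, IsCompact C → {γ : ↥Γ | ∃ c ∈ C, ψ₀ (c * γ) ≠ 0}.Finite := by
    intro C hC
    set I₁ : Set G := {i | (support ⇑(f i) ∩ (π '' C)).Nonempty} with hI₁def
    have hI₁ : I₁.Finite := f.locallyFinite.finite_nonempty_inter_compact (hC.image hπcont)
    have hsub : {γ : ↥Γ | ∃ c ∈ C, ψ₀ (c * γ) ≠ 0} ⊆
        ⋃ i ∈ I₁, {γ : ↥Γ | (γ : G) ∈ C⁻¹ * (i • closure W)} := by
      rintro γ ⟨c, hcC, hψ⟩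
      obtain ⟨i, hi⟩ := hψ₀ne hψ
      obtain ⟨hmem, hfne⟩ := hg_ne hi
      have hfne' : f i (π c) ≠ 0 := by
        rwa [hπdef, QuotientGroup.mk_mul_of_mem c γ.2] at hfne
      have hiI : i ∈ I₁ := ⟨π c, hfne', ⟨c, hcC, rfl⟩⟩
      refine mem_iUnion₂.2 ⟨i, hiI, ?_⟩
      have hgc : (γ : G) = c⁻¹ * (c * γ) := by group
      show (γ : G) ∈ C⁻¹ * (i • closure W)
      rw [hgc]
      exact Set.mul_mem_mul (Set.inv_mem_inv.2 hcC) (smul_set_mono subset_closure hmem)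
    refine (Set.Finite.biUnion hI₁ (fun i _ => ?_)).subset hsub
    have hcW : IsCompact (i • closure W) := by
      rw [show i • closure W = (fun b => i * b) '' closure W from rfl]
      exact hWc.image (continuous_mul_left i)
    have hKi : IsCompact (C⁻¹ * (i • closure W)) := hC.inv.mul hcW
    have hfin := Stmt11.finite_inter hdisc hKi
    have hset : {γ : ↥Γ | (γ : G) ∈ C⁻¹ * (i • closure W)} =
        (Subtype.val : ↥Γ → G) ⁻¹' ((Γ : Set G) ∩ (C⁻¹ * (i • closure W))) := by
      ext γ; simp [γ.2]
    rw [hset]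
    exact Set.Finite.preimage Subtype.val_injective.injOn hfin
  -- the sum identity (right-translation version)
  have hsum_right : ∀ a : G, HasSum (fun γ : ↥Γ => ψ₀ (a * γ)) 1 := by
    intro a
    have hfinA : {γ : ↥Γ | ∃ c ∈ ({a} : Set G), ψ₀ (c * γ) ≠ 0}.Finite :=
      hfin_right {a} isCompact_singleton
    have hfinA' : {γ : ↥Γ | ψ₀ (a * γ) ≠ 0}.Finite := by
      refine hfinA.subset ?_
      intro γ h
      exact ⟨a, rfl, h⟩
    set s : Finset ↥Γ := hfinA'.toFinset with hsdef
    have hs : ∀ γ : ↥Γ, ψ₀ (a * γ) ≠ 0 → γ ∈ s := fun γ h => hfinA'.mem_toFinset.2 h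
    have hzero : ∀ γ ∉ s, ψ₀ (a * (γ:G)) = 0 := by
      intro γ hγ
      by_contra h
      exact hγ (hs γ h)
    have hhs : HasSum (fun γ : ↥Γ => ψ₀ (a * γ)) (∑ γ ∈ s, ψ₀ (a * γ)) :=
      hasSum_sum_of_ne_finset_zero hzero
    have hI₀fin : (⋃ γ ∈ s, {i | g i (a * γ) ≠ 0}).Finite :=
      s.finite_toSet.biUnion (fun γ _ => hpt (a * γ))
    set T : Finset G := hI₀fin.toFinset with hTdef
    have hmemT : ∀ {i : G} {γ : ↥Γ}, γ ∈ s → g i (a * γ) ≠ 0 → i ∈ T := by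
      intro i γ hγ hgi
      exact hI₀fin.mem_toFinset.2 (mem_iUnion₂.2 ⟨γ, hγ, hgi⟩)
    have hsum1 : ∀ γ ∈ s, ψ₀ (a * (γ:G)) = ∑ i ∈ T, g i (a * γ) := by
      intro γ hγ
      exact finsum_eq_finset_sum_of_support_subset _ (fun i hi => hmemT hγ hi)
    have step : ∑ γ ∈ s, ψ₀ (a * (γ:G)) = ∑ i ∈ T, f i (π a) := by
      rw [Finset.sum_congr rfl hsum1, Finset.sum_comm]
      refine Finset.sum_congr rfl (fun i _ => ?_)
      exact hg_sum i a s (fun γ h => hs γ (hψpos i _ h))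
    have final : ∑ i ∈ T, f i (π a) = 1 := by
      rw [← finsum_eq_finset_sum_of_support_subset (fun i => f i (π a)) ?_]
      · exact f.sum_eq_one (mem_univ _)
      · intro i hi
        obtain ⟨γ, hγ⟩ := hg_exists i a hi
        exact hmemT (hs γ (hψpos i _ hγ)) hγ
    rw [step, final] at hhs
    exact hhs
  -- final: flip to left translations
  refine ⟨fun a => ψ₀ a⁻¹, hψ₀cont.comp continuous_inv, fun a => hψ₀nonneg _, ?_, ?_⟩
  · intro C hC
    have h1 : {γ : ↥Γ | ∃ c ∈ C⁻¹, ψ₀ (c * γ) ≠ 0}.Finite := hfin_right _ hC.inv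
    have h2 : {γ : ↥Γ | ∃ c ∈ C, ψ₀ (((γ:G) * c)⁻¹) ≠ 0} ⊆
        (fun γ : ↥Γ => γ⁻¹) ⁻¹' {γ : ↥Γ | ∃ c ∈ C⁻¹, ψ₀ (c * γ) ≠ 0} := by
      rintro γ ⟨c, hc, hne⟩
      refine ⟨c⁻¹, Set.inv_mem_inv.2 hc, ?_⟩
      have heq : c⁻¹ * ((γ⁻¹ : ↥Γ) : G) = ((γ:G) * c)⁻¹ := by
        rw [mul_inv_rev]; simp
      rw [heq]
      exact hne
    exact (h1.preimage (inv_injective.injOn)).subset h2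
  · intro x
    have h := hsum_right x⁻¹
    have h2 := (Equiv.inv ↥Γ).hasSum_iff.2 h
    have hfun : (fun γ : ↥Γ => ψ₀ (((γ:G) * x)⁻¹)) =
        (fun γ : ↥Γ => ψ₀ (x⁻¹ * γ)) ∘ (Equiv.inv ↥Γ) := by
      funext γ
      simp [Equiv.inv_apply, mul_inv_rev]
    show HasSum (fun γ : ↥Γ => ψ₀ (((γ:G) * x)⁻¹)) 1
    rw [hfun]
    exact h2
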